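/- Let μ > 1, C, ε > 0, and ξ_b > 1 with ξ_b ≃ 1. Suppose v : [1,∞) → [0,∞) satisfies the Volterra equation v(ξ) = 𝟙_{[1,ξ_b]}(ξ) + Cε ∫₁^ξ (2μ + ξ − η)⁻¹ v(η) dη. Then for all ξ ≥ ξ_b, v(ξ) ≥ 𝟙_{[1,ξ_b]}(ξ) + Cε log( 1 + (ξ_b − 1)/(2μ + ξ − ξ_b) ); in particular v(ξ) ≥ Cε (ξ_b − 1)/(2μ + ξ − ξ_b) ≥ Cε(ξ_b−1)/(2(2μ + ξ)) for large ξ, so v(ξ) cannot decay faster than ξ⁻¹ as ξ → ∞. -/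

import Mathlib

open Set

lemma log_ge_aux {x : ℝ} (hx : 0 ≤ x) : x / (1 + x) ≤ Real.log (1 + x) := by
  have h1 : (0:ℝ) < 1 + x := by linarith
  have h := Real.log_le_sub_one_of_pos (x := (1+x)⁻¹) (by positivity)
  rw [Real.log_inv] at h
  have : (1+x)⁻¹ - 1 = -(x/(1+x)) := by field_simp; ring
  linarith [this ▸ h]

/-- Optimality of the decay rate: a lower bound for solutions of the Volterra equation. -/
theorem volterra_lower_bound
    (μ C ε ξb : ℝ) (hμ : 1 < μ) (hC : 0 < C) (hε : 0 < ε) (hξb : 1 < ξb)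
    (v : ℝ → ℝ) (hv0 : ∀ ξ ≥ (1:ℝ), 0 ≤ v ξ)
    (hint : ∀ ξ ≥ (1:ℝ), IntervalIntegrable v MeasureTheory.volume 1 ξ)
    (heq : ∀ ξ ≥ (1:ℝ), v ξ = indicator (Icc (1:ℝ) ξb) (fun _ => (1:ℝ)) ξ
        + C*ε * ∫ η in (1:ℝ)..ξ, (2*μ + ξ - η)⁻¹ * v η) :
    (∀ ξ ≥ ξb, v ξ ≥ indicator (Icc (1:ℝ) ξb) (fun _ => (1:ℝ)) ξ
        + C*ε * Real.log (1 + (ξb - 1) / (2*μ + ξ - ξb)))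
    ∧ ∃ Ξ ≥ ξb, ∀ ξ ≥ Ξ, v ξ ≥ C*ε*(ξb - 1) / (2*(2*μ + ξ)) := by
  have hCε : 0 < C * ε := mul_pos hC hε
  -- v ≥ 1 on [1, ξb]
  have hv1 : ∀ η ∈ Icc (1:ℝ) ξb, 1 ≤ v η := by
    intro η hη
    rw [heq η hη.1, indicator_of_mem hη]
    have hInt : (0:ℝ) ≤ ∫ t in (1:ℝ)..η, (2*μ + η - t)⁻¹ * v t := by
      apply intervalIntegral.integral_nonneg hη.1
      intro t ht
      have hpos : 0 < 2*μ + η - t := by nlinarith [ht.2, ht.1]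
      exact mul_nonneg (le_of_lt (inv_pos.2 hpos)) (hv0 t ht.1)
    nlinarith
  have main : ∀ ξ ≥ ξb, v ξ ≥ indicator (Icc (1:ℝ) ξb) (fun _ => (1:ℝ)) ξ
      + C*ε * Real.log (1 + (ξb - 1) / (2*μ + ξ - ξb)) := by
    intro ξ hξ
    have hξ1 : (1:ℝ) ≤ ξ := le_trans hξb.le hξ
    have hcont : ContinuousOn (fun η => (2*μ + ξ - η)⁻¹) (uIcc (1:ℝ) ξ) := by
      apply ContinuousOn.inv₀ (by fun_prop)
      intro t ht
      rw [uIcc_of_le hξ1] at ht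
      nlinarith [ht.2]
    have hg : IntervalIntegrable (fun η => (2*μ + ξ - η)⁻¹ * v η)
        MeasureTheory.volume 1 ξ := (hint ξ hξ1).continuousOn_mul hcont
    have hg1 : IntervalIntegrable (fun η => (2*μ + ξ - η)⁻¹ * v η)
        MeasureTheory.volume 1 ξb := hg.mono_set (by
          rw [uIcc_of_le hξb.le, uIcc_of_le hξ1]
          exact Icc_subset_Icc le_rfl hξ)
    have hg2 : IntervalIntegrable (fun η => (2*μ + ξ - η)⁻¹ * v η)
        MeasureTheory.volume ξb ξ := hg.mono_set (by
          rw [uIcc_of_le hξ, uIcc_of_le hξ1]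
          exact Icc_subset_Icc hξb.le le_rfl)
    have hcont1 : IntervalIntegrable (fun η => (2*μ + ξ - η)⁻¹)
        MeasureTheory.volume 1 ξb := by
      apply ContinuousOn.intervalIntegrable
      exact hcont.mono (by rw [uIcc_of_le hξb.le, uIcc_of_le hξ1]; exact Icc_subset_Icc le_rfl hξ)
    -- split and bound the integral
    have hsplit : (∫ η in (1:ℝ)..ξ, (2*μ + ξ - η)⁻¹ * v η)
        = (∫ η in (1:ℝ)..ξb, (2*μ + ξ - η)⁻¹ * v η)
          + ∫ η in ξb..ξ, (2*μ + ξ - η)⁻¹ * v η :=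
      (intervalIntegral.integral_add_adjacent_intervals hg1 hg2).symm
    have h2nonneg : 0 ≤ ∫ η in ξb..ξ, (2*μ + ξ - η)⁻¹ * v η := by
      apply intervalIntegral.integral_nonneg hξ
      intro t ht
      have hpos : 0 < 2*μ + ξ - t := by nlinarith [ht.2]
      exact mul_nonneg (le_of_lt (inv_pos.2 hpos)) (hv0 t (le_trans hξb.le ht.1))
    have hmono : (∫ η in (1:ℝ)..ξb, (2*μ + ξ - η)⁻¹)
        ≤ ∫ η in (1:ℝ)..ξb, (2*μ + ξ - η)⁻¹ * v η := by
      apply intervalIntegral.integral_mono_on hξb.le hcont1 hg1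
      intro t ht
      have hpos : 0 < 2*μ + ξ - t := by nlinarith [ht.2]
      nlinarith [hv1 t ht, inv_pos.2 hpos]
    have hcomp : (∫ η in (1:ℝ)..ξb, (2*μ + ξ - η)⁻¹)
        = Real.log (1 + (ξb - 1) / (2*μ + ξ - ξb)) := by
      have h1 : (∫ η in (1:ℝ)..ξb, (2*μ + ξ - η)⁻¹)
          = ∫ u in (2*μ + ξ - ξb)..(2*μ + ξ - 1), u⁻¹ :=
        intervalIntegral.integral_comp_sub_left (fun u => u⁻¹) (2*μ + ξ)
      have hb : 0 < 2*μ + ξ - ξb := by nlinarith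
      have ha : 0 < 2*μ + ξ - 1 := by nlinarith
      rw [h1, integral_inv (by
        rw [uIcc_of_le (by linarith)]
        intro h0
        exact absurd h0.1 (by simp; linarith))]
      congr 1
      field_simp
      ring
    have key : Real.log (1 + (ξb - 1) / (2*μ + ξ - ξb))
        ≤ ∫ η in (1:ℝ)..ξ, (2*μ + ξ - η)⁻¹ * v η := by
      rw [hsplit, ← hcomp]; linarith
    rw [heq ξ hξ1]
    have := mul_le_mul_of_nonneg_left key hCε.le
    linarith
  refine ⟨main, ξb, le_rfl, ?_⟩
  intro ξ hξ
  have hb : 0 < 2*μ + ξ - ξb := by nlinarith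
  have hx : 0 ≤ (ξb - 1) / (2*μ + ξ - ξb) := div_nonneg (by linarith) hb.le
  have hlog := log_ge_aux hx
  have hxval : (ξb - 1) / (2*μ + ξ - ξb) / (1 + (ξb - 1) / (2*μ + ξ - ξb))
      = (ξb - 1) / (2*μ + ξ - 1) := by
    rw [div_div]
    congr 1
    field_simp
    ring
  rw [hxval] at hlog
  have hfrac : C*ε*(ξb - 1) / (2*(2*μ + ξ)) ≤ C*ε * ((ξb - 1) / (2*μ + ξ - 1)) := by
    rw [mul_div_assoc]
    apply mul_le_mul_of_nonneg_left _ hCε.le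
    apply div_le_div_of_nonneg_left (by linarith) (by linarith) (by nlinarith)
  have h1 := main ξ hξ
  have hind : 0 ≤ indicator (Icc (1:ℝ) ξb) (fun _ => (1:ℝ)) ξ := by
    apply indicator_nonneg; intro _ _; norm_num
  have := mul_le_mul_of_nonneg_left hlog hCε.le
  linarith
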